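/- Let n ≥ 1, N a natural number, x ∈ ℝ^n, and for each k = 0, 1, ..., N-1 let f_k : ℝ^n → ℝ^n. Let z : ℝ → ℝ^n be continuous on [0, N] with z(0) = x, such that for every natural number k < N and every t ∈ [k, k+1), z has right derivative f_k(z(k)) at t (derivative within [t, ∞)). Then for every k < N, z(k+1) = z(k) + f_k(z(k)); equivalently, z(N) is obtained from x by successively applying the residual maps y ↦ y + f_k(y) for k = 0, ..., N-1. -/

import Mathlib

theorem unshared_npcdde_is_resnet
    (n : ℕ) (hn : 1 ≤ n) (N : ℕ)
    (f : ℕ → EuclideanSpace ℝ (Fin n) → EuclideanSpace ℝ (Fin n))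
    (x : EuclideanSpace ℝ (Fin n)) (z : ℝ → EuclideanSpace ℝ (Fin n))
    (hzc : ContinuousOn z (Set.Icc 0 (N : ℝ)))
    (hz0 : z 0 = x)
    (hz' : ∀ k < N, ∀ t ∈ Set.Ico ((k : ℝ)) ((k : ℝ) + 1),
      HasDerivWithinAt z (f k (z k)) (Set.Ici t) t) :
    ∀ k < N, z ((k : ℝ) + 1) = z k + f k (z k) := by
  intro k hk
  set c := f k (z k) with hc
  set g : ℝ → EuclideanSpace ℝ (Fin n) := fun t => z t - (t - (k : ℝ)) • c with hg
  have hsub : Set.Icc ((k : ℝ)) ((k : ℝ) + 1) ⊆ Set.Icc 0 (N : ℝ) := by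
    apply Set.Icc_subset_Icc
    · positivity
    · have : (k : ℝ) + 1 ≤ (N : ℝ) := by exact_mod_cast hk
      linarith
  have hgc : ContinuousOn g (Set.Icc ((k : ℝ)) ((k : ℝ) + 1)) := by
    apply (hzc.mono hsub).sub
    exact (Continuous.smul (continuous_id.sub continuous_const) continuous_const).continuousOn
  have hgd : ∀ t ∈ Set.Ico ((k : ℝ)) ((k : ℝ) + 1),
      HasDerivWithinAt g 0 (Set.Ici t) t := by
    intro t ht
    have h1 := hz' k hk t ht
    have h2 : HasDerivWithinAt (fun t : ℝ => (t - (k : ℝ)) • c) c (Set.Ici t) t := by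
      have : HasDerivAt (fun t : ℝ => (t - (k : ℝ)) • c) ((1 : ℝ) • c) t := by
        exact (((hasDerivAt_id t).sub_const _)).smul_const c
      simpa using this.hasDerivWithinAt
    have h3 := h1.sub h2
    rw [← hc, sub_self] at h3
    exact h3
  have := constant_of_has_deriv_right_zero hgc hgd ((k : ℝ) + 1)
    (by constructor <;> linarith)
  have hgk : g (k : ℝ) = z k := by simp [hg]
  have hgk1 : g ((k : ℝ) + 1) = z ((k : ℝ) + 1) - c := by simp [hg]
  rw [hgk1, hgk] at this
  rw [sub_eq_iff_eq_add] at this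
  exact this
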